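/- For every constant c > 4 and every integer l ≥ 1, the spider graph G_l has highway dimension 1 with respect to c: for every r > 0 and every ball B_{cr}(t), a single vertex hits all shortest paths lying inside B_{cr}(t) of length more than r. Moreover, for every c' > c, the highway dimension of G_l with respect to c' is at least l: taking r = c/c', any set of vertices in B_{c'r}(u) hitting all shortest paths lying inside B_{c'r}(u) of length more than r must contain v_i or w_i for every i ∈ {1,…,l}. -/

import Mathlib

open SimpleGraph

universe u

variable {V : Type u}

/-- The length of a walk in a graph `G` with edge lengths `len`. -/
noncomputable def wlen {G : SimpleGraph V} (len : V → V → ℝ) {u v : V} (w : G.Walk u v) : ℝ :=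
  (w.darts.map (fun e => len e.toProd.1 e.toProd.2)).sum

/-- A walk is a *shortest path* (w.r.t. the shortest-path metric `d`) if it is a
path whose total length equals the distance between its endpoints. -/
def IsShortestPath {G : SimpleGraph V} (len d : V → V → ℝ) {u v : V}
    (w : G.Walk u v) : Prop :=
  w.IsPath ∧ wlen len w = d u v

/-- `d` is the shortest-path metric of the graph `G` with edge lengths `len`:
it is a lower bound on the length of every walk, and for every pair of vertices it
is attained by some path (a shortest path). -/
def IsShortestPathMetric (G : SimpleGraph V) (len d : V → V → ℝ) : Prop :=
  (∀ (u v : V) (w : G.Walk u v), d u v ≤ wlen len w) ∧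
  (∀ u v : V, ∃ w : G.Walk u v, IsShortestPath len d w)

/-- The closed ball `B_r(v)` of radius `r` around `v` (w.r.t. `d`). -/
def cball (d : V → V → ℝ) (v : V) (r : ℝ) : Set V := {u | d u v ≤ r}

/-- A *shortest path cover* for scale `r` (with parameter `c`): a set of hubs
hitting every shortest path of length in `(r, c*r/2]`. -/
def IsSPC (G : SimpleGraph V) (len d : V → V → ℝ) (c r : ℝ) (H : Set V) : Prop :=
  ∀ (u v : V) (w : G.Walk u v), IsShortestPath len d w →
    r < wlen len w → wlen len w ≤ c * r / 2 → ∃ h ∈ H, h ∈ w.support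

/-- A minimal shortest path cover: no proper subset is a shortest path cover. -/
def IsMinimalSPC (G : SimpleGraph V) (len d : V → V → ℝ) (c r : ℝ) (H : Set V) : Prop :=
  IsSPC G len d c r H ∧ ∀ H' : Set V, H' ⊂ H → ¬ IsSPC G len d c r H'

/-- `H` is locally `s`-sparse for scale `r`: every ball of radius `c*r/2` contains
at most `s` vertices of `H`. -/
def LocallySparse (d : V → V → ℝ) (c r : ℝ) (s : ℕ) (H : Set V) : Prop :=
  ∀ v : V, (H ∩ cball d v (c * r / 2)).ncard ≤ s

/-- Definition 1: the highway dimension of `G` is at most `k` if for every scale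
`r > 0` and every ball of radius `c*r`, there are at most `k` vertices in the ball
hitting all shortest paths of length more than `r` that lie inside the ball. -/
def HighwayDimLE (G : SimpleGraph V) (len d : V → V → ℝ) (c : ℝ) (k : ℕ) : Prop :=
  ∀ r : ℝ, 0 < r → ∀ v : V, ∃ H : Set V, H ⊆ cball d v (c * r) ∧ H.ncard ≤ k ∧
    ∀ (a b : V) (w : G.Walk a b), IsShortestPath len d w →
      (∀ x ∈ w.support, x ∈ cball d v (c * r)) → r < wlen len w →
      ∃ h ∈ H, h ∈ w.support

/-- The vertex set of the spider graph: `none` is the centre `u`,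
`some (i, false)` is `v_i` and `some (i, true)` is `w_i`. -/
abbrev SpiderV (l : ℕ) := Option (Fin l × Bool)

/-- The spider graph: edges `{u, v_i}` and `{v_i, w_i}` for each `i`. -/
def spider (l : ℕ) : SimpleGraph (SpiderV l) where
  Adj a b := ∃ i : Fin l,
    (a = none ∧ b = some (i, false)) ∨ (b = none ∧ a = some (i, false)) ∨
    (a = some (i, false) ∧ b = some (i, true)) ∨
    (a = some (i, true) ∧ b = some (i, false))
  symm := by
    constructor
    rintro a b ⟨i, h⟩
    exact ⟨i, by tauto⟩
  loopless := by
    constructor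
    rintro a ⟨i, h⟩
    rcases h with ⟨h₁, h₂⟩ | ⟨h₁, h₂⟩ | ⟨h₁, h₂⟩ | ⟨h₁, h₂⟩ <;> simp_all

/-- The edge lengths of the spider graph: `{u, v_i}` has length `c - 1` and
`{v_i, w_i}` has length `1`. -/
noncomputable def spiderLen (c : ℝ) (l : ℕ) : SpiderV l → SpiderV l → ℝ :=
  fun a b =>
    match a, b with
    | none, _ => c - 1
    | _, none => c - 1
    | _, _ => 1

/-- Lemma 46 of the paper: for every `c > 4` the spider graph
`G_l` has highway dimension `1` with respect to `c` (for every `r > 0` and every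
ball `B_{cr}(t)`, a single vertex of the ball hits all shortest paths lying inside
`B_{cr}(t)` of length more than `r`), while for every `c' > c` and `r = c/c'`, any
set of vertices hitting all shortest paths lying inside `B_{c'r}(u)` of length more
than `r` must contain `v_i` or `w_i` for every `i` (so the highway dimension with
respect to `c'` is at least `l`). -/
lemma wlen_nil {G : SimpleGraph V} (len : V → V → ℝ) (u : V) :
    wlen len (Walk.nil : G.Walk u u) = 0 := rfl

lemma wlen_cons {G : SimpleGraph V} (len : V → V → ℝ) {u x v : V} (h : G.Adj u x)
    (p : G.Walk x v) : wlen len (Walk.cons h p) = len u x + wlen len p := by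
  simp [wlen]

lemma adjNV {l : ℕ} (i : Fin l) : (spider l).Adj none (some (i, false)) :=
  ⟨i, Or.inl ⟨rfl, rfl⟩⟩

lemma adjVN {l : ℕ} (i : Fin l) : (spider l).Adj (some (i, false)) none :=
  ⟨i, Or.inr (Or.inl ⟨rfl, rfl⟩)⟩

lemma adjVW {l : ℕ} (i : Fin l) : (spider l).Adj (some (i, false)) (some (i, true)) :=
  ⟨i, Or.inr (Or.inr (Or.inl ⟨rfl, rfl⟩))⟩

lemma adjWV {l : ℕ} (i : Fin l) : (spider l).Adj (some (i, true)) (some (i, false)) :=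
  ⟨i, Or.inr (Or.inr (Or.inr ⟨rfl, rfl⟩))⟩

/-- The intended distance function on the spider graph. -/
noncomputable def DD (c : ℝ) {l : ℕ} : SpiderV l → SpiderV l → ℝ
  | none, none => 0
  | none, some (_, b) => if b then c else c - 1
  | some (_, b), none => if b then c else c - 1
  | some (i, b), some (j, b') =>
      if i = j then (if b = b' then 0 else 1)
      else (if b then c else c - 1) + (if b' then c else c - 1)

lemma lb {c : ℝ} (hc : 4 < c) {l : ℕ} {u v : SpiderV l} (w : (spider l).Walk u v) :
    DD c u v ≤ wlen (spiderLen c l) w := by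
  induction w with
  | nil =>
    rename_i z
    rcases z with _ | ⟨i, b⟩ <;> simp [DD, wlen_nil]
  | @cons u x v h p ih =>
    rw [wlen_cons]
    obtain ⟨i, hi⟩ := id h
    rcases hi with ⟨rfl, rfl⟩ | ⟨rfl, rfl⟩ | ⟨rfl, rfl⟩ | ⟨rfl, rfl⟩ <;>
      rcases v with _ | ⟨j, b⟩ <;>
      (try cases b) <;>
      (try by_cases hij : i = j) <;>
      (try subst hij) <;>
      simp_all [DD, spiderLen] <;>
      linarith

/-- A path of length more than 1 in the spider must pass through the centre. -/
lemma none_mem_support {c : ℝ} {l : ℕ} {a b : SpiderV l} (w : (spider l).Walk a b)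
    (hp : w.IsPath) (hw : 1 < wlen (spiderLen c l) w) : (none : SpiderV l) ∈ w.support := by
  by_contra hn
  cases w with
  | nil => rw [wlen_nil] at hw; linarith
  | @cons _ x _ h p =>
    cases p with
    | nil =>
      rw [wlen_cons, wlen_nil] at hw
      simp only [Walk.support_cons, Walk.support_nil, List.mem_cons, List.mem_singleton] at hn
      push_neg at hn
      rcases a with _ | ⟨i, ba⟩
      · exact hn.1 rfl
      · rcases b with _ | ⟨j, bx⟩
        · exact hn.2.1 rfl
        · simp [spiderLen] at hw
    | @cons _ y _ h' p' =>
      simp only [Walk.support_cons, List.mem_cons] at hn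
      push_neg at hn
      have ha : a ≠ none := fun e => hn.1 e.symm
      have hx : x ≠ none := fun e => hn.2.1 e.symm
      have hy : y ≠ none := by
        intro e
        exact hn.2.2 (e ▸ p'.start_mem_support)
      have hay : y = a := by
        obtain ⟨i, hi⟩ := id h
        obtain ⟨j, hj⟩ := id h'
        rcases hi with ⟨e1, e2⟩ | ⟨e1, e2⟩ | ⟨e1, e2⟩ | ⟨e1, e2⟩ <;>
          rcases hj with ⟨f1, f2⟩ | ⟨f1, f2⟩ | ⟨f1, f2⟩ | ⟨f1, f2⟩ <;>
          simp_all
      rw [Walk.cons_isPath_iff] at hp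
      have hy2 : y ∈ (Walk.cons h' p').support := by
        simp [Walk.support_cons, p'.start_mem_support]
      exact hp.2 (hay ▸ hy2)

/-- If a nontrivial walk stays strictly within distance `c` of `t`, it passes through `t`. -/
lemma hub_mem_support {c : ℝ} (hc : 4 < c) {l : ℕ} {d : SpiderV l → SpiderV l → ℝ}
    (hD : ∀ u v : SpiderV l, DD c u v ≤ d u v) (t : SpiderV l) {a b : SpiderV l}
    (w : (spider l).Walk a b) (h0 : 0 < wlen (spiderLen c l) w)
    (hb : ∀ x ∈ w.support, d x t < c) : t ∈ w.support := by
  by_contra ht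
  cases w with
  | nil => rw [wlen_nil] at h0; linarith
  | @cons _ x _ h p =>
    have hmem : a ∈ (Walk.cons h p).support := Walk.start_mem_support _
    have hmemx : x ∈ (Walk.cons h p).support := by
      simp [Walk.support_cons, p.start_mem_support]
    have hat : a ≠ t := fun e => ht (e ▸ hmem)
    have hxt : x ≠ t := fun e => ht (e ▸ hmemx)
    have hba := lt_of_le_of_lt (hD a t) (hb a hmem)
    have hbx := lt_of_le_of_lt (hD x t) (hb x hmemx)
    obtain ⟨i, hi⟩ := id h
    rcases hi with ⟨rfl, rfl⟩ | ⟨rfl, rfl⟩ | ⟨rfl, rfl⟩ | ⟨rfl, rfl⟩ <;>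
      rcases t with _ | ⟨j, bt⟩ <;>
      (try cases bt) <;>
      (try by_cases hij : i = j) <;>
      (try subst hij) <;>
      simp_all [DD] <;>
      linarith

theorem statement15 (c : ℝ) (hc : 4 < c) (l : ℕ) (hl : 1 ≤ l)
    (d : SpiderV l → SpiderV l → ℝ)
    (hmetric : IsShortestPathMetric (spider l) (spiderLen c l) d) :
    (∀ r : ℝ, 0 < r → ∀ t : SpiderV l,
      ∃ h ∈ cball d t (c * r),
        ∀ (a b : SpiderV l) (w : (spider l).Walk a b),
          IsShortestPath (spiderLen c l) d w →
          (∀ x ∈ w.support, x ∈ cball d t (c * r)) →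
          r < wlen (spiderLen c l) w → h ∈ w.support) ∧
    (∀ c' : ℝ, c < c' → ∀ H : Set (SpiderV l),
      (∀ (a b : SpiderV l) (w : (spider l).Walk a b),
        IsShortestPath (spiderLen c l) d w →
        (∀ x ∈ w.support, x ∈ cball d (none : SpiderV l) (c' * (c / c'))) →
        c / c' < wlen (spiderLen c l) w → ∃ h ∈ H, h ∈ w.support) →
      ∀ i : Fin l, some (i, false) ∈ H ∨ some (i, true) ∈ H) := by
  obtain ⟨hle, hex⟩ := hmetric
  have hD : ∀ u v : SpiderV l, DD c u v ≤ d u v := by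
    intro u v
    obtain ⟨w, _, he⟩ := hex u v
    rw [← he]
    exact lb hc w
  have hself : ∀ t : SpiderV l, d t t ≤ 0 := fun t => by
    simpa [wlen_nil] using hle t t Walk.nil
  have hnone : ∀ t : SpiderV l, d (none : SpiderV l) t ≤ c := by
    intro t
    rcases t with _ | ⟨i, b⟩
    · linarith [hself (none : SpiderV l)]
    · cases b
      · have := hle _ _ (Walk.cons (adjNV i) Walk.nil)
        rw [wlen_cons, wlen_nil] at this
        simp only [spiderLen] at this
        linarith
      · have := hle _ _ (Walk.cons (adjNV i) (Walk.cons (adjVW i) Walk.nil))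
        rw [wlen_cons, wlen_cons, wlen_nil] at this
        simp only [spiderLen] at this
        linarith
  constructor
  · intro r hr t
    by_cases h1 : 1 ≤ r
    · refine ⟨none, ?_, ?_⟩
      · simp only [cball, Set.mem_setOf_eq]
        calc d (none : SpiderV l) t ≤ c := hnone t
          _ ≤ c * r := by nlinarith
      · intro a b w hsp hball hlw
        exact none_mem_support w hsp.1 (by linarith)
    · push_neg at h1
      refine ⟨t, ?_, ?_⟩
      · simp only [cball, Set.mem_setOf_eq]
        have hpos : (0:ℝ) < c * r := mul_pos (by linarith) hr
        linarith [hself t]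
      · intro a b w hsp hball hlw
        refine hub_mem_support hc hD t w (by linarith) ?_
        intro x hx
        have hx2 := hball x hx
        simp only [cball, Set.mem_setOf_eq] at hx2
        have hcr : c * r < c := by nlinarith
        linarith
  · intro c' hcc' H hH i
    have hc'0 : (0:ℝ) < c' := by linarith
    have hrad : c' * (c / c') = c := by field_simp
    have hdvw : d (some (i, false)) (some (i, true)) = 1 := by
      have hu : d (some (i, false) : SpiderV l) (some (i, true)) ≤ 1 := by
        have := hle _ _ (Walk.cons (adjVW i) Walk.nil)
        rw [wlen_cons, wlen_nil] at this
        simp only [spiderLen] at this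
        linarith
      have hlo := hD (some (i, false)) (some (i, true))
      simp only [DD, if_pos rfl] at hlo
      norm_num at hlo
      linarith
    have hwlen : wlen (spiderLen c l) (Walk.cons (adjVW i) Walk.nil) = 1 := by
      rw [wlen_cons, wlen_nil]
      simp [spiderLen]
    have hsp : IsShortestPath (spiderLen c l) d (Walk.cons (adjVW i) Walk.nil) := by
      constructor
      · rw [Walk.cons_isPath_iff]
        exact ⟨Walk.IsPath.nil, by simp⟩
      · rw [hwlen, hdvw]
    have hball : ∀ x ∈ (Walk.cons (adjVW i) Walk.nil).support,
        x ∈ cball d (none : SpiderV l) (c' * (c / c')) := by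
      intro x hx
      simp only [cball, Set.mem_setOf_eq]
      rw [hrad]
      simp only [Walk.support_cons, Walk.support_nil, List.mem_cons,
        List.mem_singleton] at hx
      rcases hx with rfl | rfl | h
      · have := hle _ _ (Walk.cons (adjVN i) Walk.nil)
        rw [wlen_cons, wlen_nil] at this
        simp only [spiderLen] at this
        linarith
      · have := hle _ _ (Walk.cons (adjWV i) (Walk.cons (adjVN i) Walk.nil))
        rw [wlen_cons, wlen_cons, wlen_nil] at this
        simp only [spiderLen] at this
        linarith
      · simp at h
    have hlen : c / c' < wlen (spiderLen c l) (Walk.cons (adjVW i) Walk.nil) := by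
      rw [hwlen, div_lt_one hc'0]
      linarith
    obtain ⟨h, hh, hs⟩ := hH _ _ _ hsp hball hlen
    simp only [Walk.support_cons, Walk.support_nil, List.mem_cons,
      List.mem_singleton] at hs
    rcases hs with rfl | rfl | h2
    · exact Or.inl hh
    · exact Or.inr hh
    · simp at h2
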